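/- (Birkhoff–Hopf contraction theorem) Let K ∈ ℝ_{>0}^{R1×R2} be a matrix with strictly positive entries, ψ(K) = max_{i,j,k,l} (K_{ik} K_{jl})/(K_{jk} K_{il}), and κ(K) = (√ψ(K) − 1)/(√ψ(K) + 1). Then for any pair of entrywise positive vectors x, y ∈ ℝ_{>0}^{R2}, d_HP(Kx, Ky) ≤ κ(K) · d_HP(x, y). -/

import Mathlib

noncomputable section

/-- The Hilbert projective metric `d_HP(x,y) = log max_{i,j} (x_i y_j)/(x_j y_i)`
on entrywise positive vectors. -/
def dHP {R : ℕ} (x y : Fin R → ℝ) : ℝ :=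
  Real.log (⨆ i, ⨆ j, x i * y j / (x j * y i))

/-- `ψ(K) = max_{i,j,k,l} (K_{ik} K_{jl})/(K_{jk} K_{il})` for a positive matrix `K`. -/
def psiK {R1 R2 : ℕ} (K : Matrix (Fin R1) (Fin R2) ℝ) : ℝ :=
  ⨆ i, ⨆ j, ⨆ k, ⨆ l, K i k * K j l / (K j k * K i l)

/-- The Birkhoff contraction constant `κ(K) = (√ψ(K) - 1)/(√ψ(K) + 1)`. -/
def kappaK {R1 R2 : ℕ} (K : Matrix (Fin R1) (Fin R2) ℝ) : ℝ :=
  (Real.sqrt (psiK K) - 1) / (Real.sqrt (psiK K) + 1)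

open Set

private lemma le_sup2 {R1 R2 : ℕ} (f : Fin R1 → Fin R2 → ℝ) (i : Fin R1) (j : Fin R2) :
    f i j ≤ ⨆ i, ⨆ j, f i j :=
  le_trans (le_ciSup (Set.Finite.bddAbove (Set.finite_range _)) j)
    (le_ciSup (f := fun i => ⨆ j, f i j) (Set.Finite.bddAbove (Set.finite_range _)) i)

private lemma sup2_le {R1 R2 : ℕ} [Nonempty (Fin R1)] [Nonempty (Fin R2)]
    {f : Fin R1 → Fin R2 → ℝ} {c : ℝ} (h : ∀ i j, f i j ≤ c) :
    (⨆ i, ⨆ j, f i j) ≤ c :=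
  ciSup_le fun i => ciSup_le (h i)

private lemma le_sup4 {R1 R2 : ℕ} (f : Fin R1 → Fin R1 → Fin R2 → Fin R2 → ℝ)
    (i j : Fin R1) (k l : Fin R2) :
    f i j k l ≤ ⨆ i, ⨆ j, ⨆ k, ⨆ l, f i j k l :=
  le_trans (le_sup2 (f i j) k l) (le_sup2 (fun i j => ⨆ k, ⨆ l, f i j k l) i j)

/-- Core algebraic inequality. -/
private lemma algB {u v s t : ℝ} (hu : 1 ≤ u) (hv : 1 ≤ v) (hs : 0 < s) (ht : 0 < t)
    (hst : s ≤ v^2 * t) :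
    (u^2*s + 1)*(t+1)*(u+v)^2 ≤ (1+u*v)^2*(u^2*t+1)*(s+1) := by
  have h1 : (u^2*s+1)*(v^2*t+1) ≤ (u^2*v^2*t+1)*(s+1) := by
    nlinarith [mul_nonneg (by nlinarith : (0:ℝ) ≤ u^2-1) (by nlinarith : (0:ℝ) ≤ v^2*t - s)]
  have h2 : (u^2*v^2*t+1)*(t+1)*(u+v)^2 ≤ (1+u*v)^2*(v^2*t+1)*(u^2*t+1) := by
    nlinarith [mul_nonneg (mul_nonneg (mul_nonneg (mul_nonneg
      (by linarith : (0:ℝ) ≤ 1+u) (by linarith : (0:ℝ) ≤ 1+v))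
      (by linarith : (0:ℝ) ≤ u-1)) (by linarith : (0:ℝ) ≤ v-1)) (sq_nonneg (u*v*t-1))]
  have hvt : (0:ℝ) < v^2*t+1 := by positivity
  have chain : (u^2*s+1)*(t+1)*(u+v)^2 * (v^2*t+1) ≤ (1+u*v)^2*(u^2*t+1)*(s+1) * (v^2*t+1) := by
    calc (u^2*s+1)*(t+1)*(u+v)^2 * (v^2*t+1)
        = ((u^2*s+1)*(v^2*t+1)) * ((t+1)*(u+v)^2) := by ring
      _ ≤ ((u^2*v^2*t+1)*(s+1)) * ((t+1)*(u+v)^2) := by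
          apply mul_le_mul_of_nonneg_right h1; positivity
      _ = ((u^2*v^2*t+1)*(t+1)*(u+v)^2) * (s+1) := by ring
      _ ≤ ((1+u*v)^2*(v^2*t+1)*(u^2*t+1)) * (s+1) := by
          apply mul_le_mul_of_nonneg_right h2; positivity
      _ = (1+u*v)^2*(u^2*t+1)*(s+1) * (v^2*t+1) := by ring
  exact le_of_mul_le_mul_right chain hvt

/-- Product form of the core algebraic inequality. -/
private lemma algB' {u v m a b a' b' : ℝ} (hu : 1 ≤ u) (hv : 1 ≤ v) (hm : 0 < m)
    (ha : 0 < a) (hb : 0 < b) (ha' : 0 < a') (hb' : 0 < b')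
    (hcross : a * b' ≤ v^2 * (a' * b)) :
    (m*u^2*a + m*b)*(a'+b')*(u+v)^2 ≤ (1+u*v)^2*((m*u^2*a' + m*b')*(a+b)) := by
  have hs : (0:ℝ) < a/b := div_pos ha hb
  have ht : (0:ℝ) < a'/b' := div_pos ha' hb'
  have hst : a/b ≤ v^2 * (a'/b') := by
    rw [mul_div_assoc' (v^2), div_le_div_iff₀ hb hb']
    nlinarith [hcross]
  have H := algB hu hv hs ht hst
  have hbne : b ≠ 0 := ne_of_gt hb
  have hb'ne : b' ≠ 0 := ne_of_gt hb'
  have hL : (m*u^2*a + m*b)*(a'+b')*(u+v)^2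
      = ((u^2*(a/b)+1)*((a'/b')+1)*(u+v)^2) * (m*b*b') := by
    field_simp
  have hR : (1+u*v)^2*((m*u^2*a' + m*b')*(a+b))
      = ((1+u*v)^2*(u^2*(a'/b')+1)*((a/b)+1)) * (m*b*b') := by
    field_simp
  rw [hL, hR]
  exact mul_le_mul_of_nonneg_right H (by positivity)

/-- Analytic inequality: `log((1+uv)/(u+v)) ≤ (v-1)/(v+1) · log u` for `u, v ≥ 1`. -/
private lemma logA {u v : ℝ} (hu : 1 ≤ u) (hv : 1 ≤ v) :
    Real.log (1 + u*v) - Real.log (u + v) ≤ (v-1)/(v+1) * Real.log u := by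
  set κ := (v-1)/(v+1) with hκ
  set g : ℝ → ℝ := fun t => κ * Real.log t + Real.log (t+v) - Real.log (1+t*v) with hg
  have hderiv : ∀ t : ℝ, 0 < t → HasDerivAt g (κ * t⁻¹ + 1/(t+v) - v/(1+t*v)) t := by
    intro t ht
    have h1 : HasDerivAt (fun t : ℝ => κ * Real.log t) (κ * t⁻¹) t :=
      (Real.hasDerivAt_log (ne_of_gt ht)).const_mul κ
    have h2 : HasDerivAt (fun t : ℝ => Real.log (t+v)) (1/(t+v)) t :=
      ((hasDerivAt_id t).add_const v).log (ne_of_gt (by simp only [id_eq]; linarith))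
    have h3 : HasDerivAt (fun t : ℝ => Real.log (1+t*v)) (1*v/(1+t*v)) t :=
      (((hasDerivAt_id t).mul_const v).const_add 1).log (ne_of_gt (by simp only [id_eq]; nlinarith))
    have := (h1.add h2).sub h3
    simp only [one_mul] at this
    exact this
  have hmono : MonotoneOn g (Ici 1) := by
    apply monotoneOn_of_deriv_nonneg (convex_Ici 1)
    · intro t ht
      exact (hderiv t (lt_of_lt_of_le one_pos ht)).continuousAt.continuousWithinAt
    · intro t ht
      rw [interior_Ici] at ht
      exact (hderiv t (lt_trans one_pos ht)).differentiableAt.differentiableWithinAt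
    · intro t ht
      rw [interior_Ici] at ht
      have ht1 : (1:ℝ) < t := ht
      have ht0 : (0:ℝ) < t := by linarith
      rw [(hderiv t ht0).deriv]
      have hv1 : (0:ℝ) < v + 1 := by linarith
      have htv : (0:ℝ) < t + v := by linarith
      have h1tv : (0:ℝ) < 1 + t*v := by nlinarith
      have key : κ * t⁻¹ + 1/(t+v) - v/(1+t*v)
          = ((v-1)*(v*(t-1)^2)) / ((v+1)*(t*((t+v)*(1+t*v)))) := by
        rw [hκ]; field_simp; ring
      rw [key]
      apply div_nonneg
      · apply mul_nonneg (by linarith) (by positivity)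
      · positivity
  have h1 : g 1 ≤ g u := hmono (by simp) (by simpa using hu) hu
  have hg1 : g 1 = 0 := by simp [hg]
  rw [hg1] at h1
  have : 0 ≤ κ * Real.log u + Real.log (u+v) - Real.log (1+u*v) := h1
  linarith

theorem birkhoff_hopf_contraction {R1 R2 : ℕ} [Nonempty (Fin R1)] [Nonempty (Fin R2)]
    (K : Matrix (Fin R1) (Fin R2) ℝ) (hK : ∀ i j, 0 < K i j)
    (x y : Fin R2 → ℝ) (hx : ∀ i, 0 < x i) (hy : ∀ i, 0 < y i) :
    dHP (K.mulVec x) (K.mulVec y) ≤ kappaK K * dHP x y := by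
  classical
  obtain ⟨i₀, hi₀⟩ := Finite.exists_max (fun i => x i / y i)
  obtain ⟨j₀, hj₀⟩ := Finite.exists_min (fun i => x i / y i)
  set M := x i₀ / y i₀ with hM
  set m := x j₀ / y j₀ with hm
  have hm0 : 0 < m := div_pos (hx _) (hy _)
  have hM0 : 0 < M := div_pos (hx _) (hy _)
  have hmM : m ≤ M := hi₀ j₀
  have hmv : ∀ (z : Fin R2 → ℝ) (i : Fin R1), K.mulVec z i = ∑ k, K i k * z k := by
    intro z i; simp [Matrix.mulVec, dotProduct]
  -- positivity of K·y, K·x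
  have hKy : ∀ i, 0 < K.mulVec y i := by
    intro i; rw [hmv]
    exact Finset.sum_pos (fun k _ => mul_pos (hK i k) (hy k)) ⟨Classical.arbitrary _, Finset.mem_univ _⟩
  have hKx : ∀ i, 0 < K.mulVec x i := by
    intro i; rw [hmv]
    exact Finset.sum_pos (fun k _ => mul_pos (hK i k) (hx k)) ⟨Classical.arbitrary _, Finset.mem_univ _⟩
  -- psiK bounds
  have hpsi : psiK K = ⨆ i, ⨆ j, ⨆ k, ⨆ l, K i k * K j l / (K j k * K i l) := rfl
  have hterm : ∀ i j k l, K i k * K j l ≤ psiK K * (K j k * K i l) := by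
    intro i j k l
    have h := le_sup4 (fun i j k l => K i k * K j l / (K j k * K i l)) i j k l
    rw [← hpsi, div_le_iff₀ (mul_pos (hK j k) (hK i l))] at h
    exact h
  have hP1 : (1:ℝ) ≤ psiK K := by
    have i := Classical.arbitrary (Fin R1)
    have k := Classical.arbitrary (Fin R2)
    have h := le_sup4 (fun i j k l => K i k * K j l / (K j k * K i l)) i i k k
    rw [← hpsi, div_self (ne_of_gt (mul_pos (hK i k) (hK i k)))] at h
    exact h
  have hP0 : (0:ℝ) ≤ psiK K := le_trans zero_le_one hP1
  set v := Real.sqrt (psiK K) with hvdef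
  have hv1 : 1 ≤ v := Real.one_le_sqrt.mpr hP1
  have hv2 : v^2 = psiK K := Real.sq_sqrt hP0
  have hκ : kappaK K = (v-1)/(v+1) := rfl
  have hκ0 : 0 ≤ kappaK K := by
    rw [hκ]; apply div_nonneg <;> linarith
  -- dHP x y ≥ log (M/m)
  have hMm_eq : M / m = x i₀ * y j₀ / (x j₀ * y i₀) := by
    rw [hM, hm, div_div_div_comm, div_div_eq_mul_div, div_mul_eq_mul_div, div_div]
  have hdxy : Real.log (M/m) ≤ dHP x y := by
    apply Real.log_le_log (by positivity)
    rw [hMm_eq]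
    exact le_sup2 (fun i j => x i * y j / (x j * y i)) i₀ j₀
  -- bounds m y ≤ x ≤ M y
  have hmle : ∀ k, m * y k ≤ x k := fun k => (le_div_iff₀ (hy k)).mp (hj₀ k)
  have hMge : ∀ k, x k ≤ M * y k := fun k => (div_le_iff₀ (hy k)).mp (hi₀ k)
  have hxi₀ : x i₀ = M * y i₀ := by rw [hM, div_mul_cancel₀ _ (ne_of_gt (hy i₀))]
  have hxj₀ : x j₀ = m * y j₀ := by rw [hm, div_mul_cancel₀ _ (ne_of_gt (hy j₀))]
  by_cases hMm : M = m
  · -- degenerate case: x is proportional to y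
    have hxy : ∀ k, x k = m * y k := by
      intro k
      have h1 := hmle k
      have h2 := hMge k
      rw [hMm] at h2
      linarith
    have hKxy : ∀ i, K.mulVec x i = m * K.mulVec y i := by
      intro i
      rw [hmv, hmv, Finset.mul_sum]
      exact Finset.sum_congr rfl fun k _ => by rw [hxy k]; ring
    have honexy : (⨆ i, ⨆ j, x i * y j / (x j * y i)) = 1 := by
      have he : ∀ i j : Fin R2, x i * y j / (x j * y i) = 1 := by
        intro i j
        rw [hxy i, hxy j, div_eq_one_iff_eq (ne_of_gt (mul_pos (mul_pos hm0 (hy j)) (hy i)))]; ring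
      refine le_antisymm (sup2_le fun i j => (he i j).le) ?_
      have := le_sup2 (fun i j => x i * y j / (x j * y i))
        (Classical.arbitrary _) (Classical.arbitrary _)
      rw [he] at this
      exact this
    have hKsup : (⨆ i, ⨆ j, K.mulVec x i * K.mulVec y j / (K.mulVec x j * K.mulVec y i)) = 1 := by
      have he : ∀ i j : Fin R1,
          K.mulVec x i * K.mulVec y j / (K.mulVec x j * K.mulVec y i) = 1 := by
        intro i j
        rw [hKxy i, hKxy j, div_eq_one_iff_eq (ne_of_gt (mul_pos (mul_pos hm0 (hKy j)) (hKy i)))]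
        ring
      refine le_antisymm (sup2_le fun i j => (he i j).le) ?_
      have := le_sup2 (fun i j => K.mulVec x i * K.mulVec y j / (K.mulVec x j * K.mulVec y i))
        (Classical.arbitrary _) (Classical.arbitrary _)
      rw [he] at this
      exact this
    show Real.log _ ≤ kappaK K * Real.log _
    rw [hKsup, honexy, Real.log_one, mul_zero]
  · -- main case m < M
    have hmMlt : m < M := lt_of_le_of_ne hmM (Ne.symm hMm)
    set p : Fin R2 → ℝ := fun k => x k - m * y k with hp
    set q : Fin R2 → ℝ := fun k => M * y k - x k with hq
    have hp0 : ∀ k, 0 ≤ p k := fun k => by simp [hp]; linarith [hmle k]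
    have hq0 : ∀ k, 0 ≤ q k := fun k => by simp [hq]; linarith [hMge k]
    have hpi₀ : 0 < p i₀ := by
      simp only [hp]
      rw [hxi₀]
      have := hy i₀
      nlinarith
    have hqj₀ : 0 < q j₀ := by
      simp only [hq]
      rw [hxj₀]
      have := hy j₀
      nlinarith
    set a : Fin R1 → ℝ := fun i => ∑ k, K i k * p k with ha
    set b : Fin R1 → ℝ := fun i => ∑ k, K i k * q k with hb
    have ha0 : ∀ i, 0 < a i := by
      intro i
      apply Finset.sum_pos' (fun k _ => mul_nonneg (hK i k).le (hp0 k))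
      exact ⟨i₀, Finset.mem_univ _, mul_pos (hK i i₀) hpi₀⟩
    have hb0 : ∀ i, 0 < b i := by
      intro i
      apply Finset.sum_pos' (fun k _ => mul_nonneg (hK i k).le (hq0 k))
      exact ⟨j₀, Finset.mem_univ _, mul_pos (hK i j₀) hqj₀⟩
    have hab : ∀ i, a i + b i = (M - m) * K.mulVec y i := by
      intro i
      rw [hmv, ha, hb, Finset.mul_sum, ← Finset.sum_add_distrib]
      exact Finset.sum_congr rfl fun k _ => by simp [hp, hq]; ring
    have hax : ∀ i, M * a i + m * b i = (M - m) * K.mulVec x i := by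
      intro i
      rw [hmv, ha, hb, Finset.mul_sum, Finset.mul_sum, Finset.mul_sum, ← Finset.sum_add_distrib]
      exact Finset.sum_congr rfl fun k _ => by simp [hp, hq]; ring
    have hcross : ∀ i j, a i * b j ≤ psiK K * (a j * b i) := by
      intro i j
      rw [ha, hb, Finset.sum_mul_sum]
      rw [show psiK K * ((∑ k, K j k * p k) * (∑ l, K i l * q l))
          = ∑ k, ∑ l, psiK K * ((K j k * p k) * (K i l * q l)) by
        rw [Finset.sum_mul_sum, Finset.mul_sum]
        exact Finset.sum_congr rfl fun k _ => by rw [Finset.mul_sum]]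
      apply Finset.sum_le_sum
      intro k _
      apply Finset.sum_le_sum
      intro l _
      have h := hterm i j k l
      have hpq : 0 ≤ p k * q l := mul_nonneg (hp0 k) (hq0 l)
      nlinarith [hpq, hterm i j k l]
    -- u = sqrt(M/m)
    set u := Real.sqrt (M/m) with hudef
    have hMm1 : 1 ≤ M/m := (one_le_div hm0).mpr hmM
    have hu1 : 1 ≤ u := Real.one_le_sqrt.mpr hMm1
    have hu2 : u^2 = M/m := Real.sq_sqrt (by positivity)
    have hmu : m * u^2 = M := by rw [hu2]; field_simp
    -- pairwise bound on the image ratios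
    have hpair : ∀ i j, K.mulVec x i * K.mulVec y j * (u+v)^2
        ≤ (1+u*v)^2 * (K.mulVec x j * K.mulVec y i) := by
      intro i j
      have H := algB' hu1 hv1 hm0 (ha0 i) (hb0 i) (ha0 j) (hb0 j)
        (by rw [hv2]; exact hcross i j)
      rw [hmu] at H
      have e1 : (M * a i + m * b i) * (a j + b j) * (u+v)^2
          = ((M-m)^2 * (K.mulVec x i * K.mulVec y j * (u+v)^2)) := by
        rw [hax i, hab j]; ring
      have e2 : (1+u*v)^2 * ((M * a j + m * b j) * (a i + b i))
          = (M-m)^2 * ((1+u*v)^2 * (K.mulVec x j * K.mulVec y i)) := by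
        rw [hax j, hab i]; ring
      rw [e1, e2] at H
      have hMmp : (0:ℝ) < (M-m)^2 := pow_pos (sub_pos.mpr hmMlt) 2
      exact le_of_mul_le_mul_left H hMmp
    set C := (1+u*v)^2 / (u+v)^2 with hC
    have h1uv : (0:ℝ) < 1 + u*v := by nlinarith
    have huv : (0:ℝ) < u + v := by linarith
    have hCpos : 0 < C := div_pos (pow_pos h1uv 2) (pow_pos huv 2)
    have hsup_le : (⨆ i, ⨆ j, K.mulVec x i * K.mulVec y j / (K.mulVec x j * K.mulVec y i)) ≤ C := by
      apply sup2_le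
      intro i j
      rw [div_le_iff₀ (mul_pos (hKx j) (hKy i)), hC, div_mul_eq_mul_div, le_div_iff₀ (by positivity)]
      exact hpair i j
    have hsup_pos : (0:ℝ) <
        ⨆ i, ⨆ j, K.mulVec x i * K.mulVec y j / (K.mulVec x j * K.mulVec y i) := by
      have i := Classical.arbitrary (Fin R1)
      have h := le_sup2 (fun i j => K.mulVec x i * K.mulVec y j / (K.mulVec x j * K.mulVec y i)) i i
      have : K.mulVec x i * K.mulVec y i / (K.mulVec x i * K.mulVec y i) = 1 :=
        div_self (ne_of_gt (mul_pos (hKx i) (hKy i)))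
      rw [this] at h
      linarith
    -- assemble logs
    have step1 : dHP (K.mulVec x) (K.mulVec y) ≤ Real.log C := by
      show Real.log _ ≤ Real.log C
      exact Real.log_le_log hsup_pos hsup_le
    have step2 : Real.log C = 2 * (Real.log (1+u*v) - Real.log (u+v)) := by
      rw [hC, Real.log_div (by positivity) (by positivity), Real.log_pow, Real.log_pow]
      push_cast
      ring
    have step3 : Real.log (1+u*v) - Real.log (u+v) ≤ (v-1)/(v+1) * Real.log u :=
      logA hu1 hv1
    have step4 : 2 * Real.log u = Real.log (M/m) := by
      rw [← hu2, Real.log_pow]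
      push_cast
      ring
    calc dHP (K.mulVec x) (K.mulVec y) ≤ Real.log C := step1
      _ = 2 * (Real.log (1+u*v) - Real.log (u+v)) := step2
      _ ≤ 2 * ((v-1)/(v+1) * Real.log u) := by linarith [step3]
      _ = (v-1)/(v+1) * (2 * Real.log u) := by ring
      _ = kappaK K * Real.log (M/m) := by rw [step4, hκ]
      _ ≤ kappaK K * dHP x y := mul_le_mul_of_nonneg_left hdxy hκ0
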